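/- Let f₀, f₁ : ℤ × Fin 2^(m-1) → ℝ be images whose support is bounded below in the first coordinate (there exists b ∈ ℤ with f_i(h,t) = 0 for all h ≤ b). Let g = S[f₀,f₁] where S[f₀,f₁](h,2t) = f₀(h,t) + f₁(h+t,t) and S[f₀,f₁](h,2t+1) = f₀(h,t) + f₁(h+t+1,t). Then for all (h,s): f₀(h,s) = Σ_{k ≤ h-1} [g(k+1, 2s) − g(k, 2s+1)] and f₁(h,s) = Σ_{k ≤ h-1} [g(k−s, 2s+1) − g(k−s, 2s)], where the sums are over all integers k ≤ h−1 (finite sums since the supports are bounded below). -/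

import Mathlib

/-- An image on the half-strip: support bounded below in the first coordinate. -/
def BddBelowSupp {k : ℕ} (f : ℤ × Fin k → ℝ) : Prop :=
  ∃ b : ℤ, ∀ i ≤ b, ∀ j, f (i, j) = 0

/-- Halving of a slope index: local slope of the sub-section. -/
def halfIdx {m : ℕ} (s : Fin (2 ^ (m + 1))) : Fin (2 ^ m) :=
  ⟨s.val / 2, by have h1 := s.isLt; have h2 : 2 ^ (m + 1) = 2 ^ m * 2 := pow_succ 2 m; omega⟩

/-- Doubling of a slope index (even slope). -/
def dbl0 {m : ℕ} (s : Fin (2 ^ m)) : Fin (2 ^ (m + 1)) :=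
  ⟨2 * s.val, by have h1 := s.isLt; have h2 : 2 ^ (m + 1) = 2 ^ m * 2 := pow_succ 2 m; omega⟩

/-- Doubling of a slope index, plus one (odd slope). -/
def dbl1 {m : ℕ} (s : Fin (2 ^ m)) : Fin (2 ^ (m + 1)) :=
  ⟨2 * s.val + 1, by have h1 := s.isLt; have h2 : 2 ^ (m + 1) = 2 ^ m * 2 := pow_succ 2 m; omega⟩

/-- The single-level ADRT merge operator `S`:
`S[f₀,f₁](h,2t) = f₀(h,t) + f₁(h+t,t)` and `S[f₀,f₁](h,2t+1) = f₀(h,t) + f₁(h+t+1,t)`. -/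
def Smerge (m : ℕ) (f₀ f₁ : ℤ × Fin (2 ^ m) → ℝ) : ℤ × Fin (2 ^ (m + 1)) → ℝ :=
  fun p =>
    f₀ (p.1, halfIdx p.2) +
      f₁ (p.1 + ((halfIdx p.2).val : ℤ) + ((p.2.val % 2 : ℕ) : ℤ), halfIdx p.2)

lemma halfIdx_dbl0 {m : ℕ} (s : Fin (2 ^ m)) : halfIdx (dbl0 s) = s := by
  ext; simp [halfIdx, dbl0]

lemma halfIdx_dbl1 {m : ℕ} (s : Fin (2 ^ m)) : halfIdx (dbl1 s) = s := by
  ext; simp [halfIdx, dbl1]; omega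

lemma mod_dbl0 {m : ℕ} (s : Fin (2 ^ m)) : (dbl0 s).val % 2 = 0 := by
  simp [dbl0]

lemma mod_dbl1 {m : ℕ} (s : Fin (2 ^ m)) : (dbl1 s).val % 2 = 1 := by
  simp [dbl1]

lemma telescope_Ico (F : ℤ → ℝ) (b : ℤ) :
    ∀ h, b ≤ h → ∑ k ∈ Finset.Ico b h, (F (k + 1) - F k) = F h - F b := by
  refine Int.le_induction ?_ ?_
  · simp
  · intro n hn ih
    rw [show Finset.Ico b (n + 1) = Finset.Ico b n ∪ Finset.Ico n (n + 1) from
      (Finset.Ico_union_Ico_eq_Ico hn (by omega)).symm,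
      Finset.sum_union (by
        apply Finset.disjoint_left.2; intro a ha hb
        simp only [Finset.mem_Ico] at ha hb; omega)]
    rw [show Finset.Ico n (n + 1) = {n} by ext x; simp; omega, ih]
    simp

lemma telescope (F : ℤ → ℝ) (b : ℤ) (hb : ∀ i ≤ b, F i = 0) (h : ℤ) :
    ∑ᶠ k ∈ Set.Iio h, (F (k + 1) - F k) = F h := by
  rcases le_or_gt h b with hh | hh
  · rw [hb h hh, finsum_mem_of_eqOn_zero]
    intro k hk
    simp only [Set.mem_Iio] at hk
    show F (k + 1) - F k = 0
    rw [hb k (by omega), hb (k + 1) (by omega)]; ring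
  · rw [finsum_mem_eq_sum_of_inter_support_eq _
      (t := Finset.Ico b h) ?_, telescope_Ico F b h (le_of_lt hh), hb b le_rfl, sub_zero]
    ext k
    simp only [Set.mem_inter_iff, Set.mem_Iio, Function.mem_support, Finset.coe_Ico,
      Set.mem_Ico]
    constructor
    · rintro ⟨hk, hne⟩
      have hbk : b ≤ k := by
        by_contra hkb
        push_neg at hkb
        exact hne (by rw [hb k (by omega), hb (k + 1) (by omega)]; ring)
      exact ⟨⟨hbk, hk⟩, hne⟩
    · rintro ⟨⟨_, hk⟩, hne⟩; exact ⟨hk, hne⟩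

/-- Exactness of the single-level inversion formula: for half-strip images
`f₀, f₁`, the values of the pair are recovered from `g = S[f₀,f₁]` by the
back-substitution sums over `k ≤ h - 1`. -/
theorem Smerge_inversion_formula (m : ℕ) (f₀ f₁ : ℤ × Fin (2 ^ m) → ℝ)
    (h₀ : BddBelowSupp f₀) (h₁ : BddBelowSupp f₁) (h : ℤ) (s : Fin (2 ^ m)) :
    f₀ (h, s) = ∑ᶠ k ∈ Set.Iio h,
        (Smerge m f₀ f₁ (k + 1, dbl0 s) - Smerge m f₀ f₁ (k, dbl1 s)) ∧
    f₁ (h, s) = ∑ᶠ k ∈ Set.Iio h,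
        (Smerge m f₀ f₁ (k - (s.val : ℤ), dbl1 s)
          - Smerge m f₀ f₁ (k - (s.val : ℤ), dbl0 s)) := by
  obtain ⟨b₀, hb₀⟩ := h₀
  obtain ⟨b₁, hb₁⟩ := h₁
  have key : ∀ k : ℤ,
      Smerge m f₀ f₁ (k + 1, dbl0 s) - Smerge m f₀ f₁ (k, dbl1 s)
        = f₀ (k + 1, s) - f₀ (k, s) := by
    intro k
    simp only [Smerge, halfIdx_dbl0, halfIdx_dbl1, mod_dbl0, mod_dbl1]
    push_cast
    ring_nf
  have key2 : ∀ k : ℤ,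
      Smerge m f₀ f₁ (k - (s.val : ℤ), dbl1 s) - Smerge m f₀ f₁ (k - (s.val : ℤ), dbl0 s)
        = f₁ (k + 1, s) - f₁ (k, s) := by
    intro k
    simp only [Smerge, halfIdx_dbl0, halfIdx_dbl1, mod_dbl0, mod_dbl1]
    push_cast
    ring_nf
  constructor
  · calc f₀ (h, s) = ∑ᶠ k ∈ Set.Iio h, (f₀ (k + 1, s) - f₀ (k, s)) :=
          (telescope (fun k => f₀ (k, s)) b₀ (fun i hi => hb₀ i hi s) h).symm
      _ = _ := by
          apply finsum_mem_congr rfl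
          intro k _; rw [key k]
  · calc f₁ (h, s) = ∑ᶠ k ∈ Set.Iio h, (f₁ (k + 1, s) - f₁ (k, s)) :=
          (telescope (fun k => f₁ (k, s)) b₁ (fun i hi => hb₁ i hi s) h).symm
      _ = _ := by
          apply finsum_mem_congr rfl
          intro k _; rw [key2 k]
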